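/- If λ is an ℓ-partition, then the i-signature of λ equals its reduced i-signature; that is, there is no addable i-box of λ occurring in a row strictly above a removable i-box of λ. -/

import Mathlib

/-- The hook length of the box `(a, b)` (0-indexed row `a`, column `b`)
of the Young diagram `μ`: the number of boxes to the right in its row,
plus the number of boxes below in its column, plus one. -/
def hookLen (μ : YoungDiagram) (a b : ℕ) : ℕ :=
  μ.rowLen a + μ.colLen b - a - b - 1

/-- A partition (Young diagram) is an `ℓ`-core when no box has hook length
divisible by `ℓ`. -/
def IsCore (ℓ : ℕ) (μ : YoungDiagram) : Prop :=
  ∀ a b : ℕ, (a, b) ∈ μ → ¬ ℓ ∣ hookLen μ a b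

/-- Two cells are adjacent if they share an edge. -/
def AdjCell (p q : ℕ × ℕ) : Prop :=
  (p.1 = q.1 ∧ (p.2 = q.2 + 1 ∨ q.2 = p.2 + 1)) ∨
  (p.2 = q.2 ∧ (p.1 = q.1 + 1 ∨ q.1 = p.1 + 1))

/-- A finite set of cells is connected if any two of its cells are joined by a
path of edge-adjacent cells inside the set. -/
def ConnectedCells (s : Finset (ℕ × ℕ)) : Prop :=
  ∀ p ∈ s, ∀ q ∈ s,
    Relation.ReflTransGen (fun x y => x ∈ s ∧ y ∈ s ∧ AdjCell x y) p q

/-- A set of cells contains no 2×2 square. -/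
def No2x2 (s : Finset (ℕ × ℕ)) : Prop :=
  ¬ ∃ a b : ℕ, (a, b) ∈ s ∧ (a + 1, b) ∈ s ∧ (a, b + 1) ∈ s ∧ (a + 1, b + 1) ∈ s

/-- `s` is a removable `ℓ`-rim hook of the Young diagram `lam`: a connected set of
`ℓ` cells of `lam`, containing no 2×2 square, whose removal from `lam` leaves the
Young diagram of a partition. -/
def IsRemovableRimHook (ℓ : ℕ) (lam : YoungDiagram) (s : Finset (ℕ × ℕ)) : Prop :=
  ∃ μ : YoungDiagram, μ.cells ⊆ lam.cells ∧ s = lam.cells \ μ.cells ∧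
    s.card = ℓ ∧ ConnectedCells s ∧ No2x2 s

/-- A set of cells all lying in a single row. -/
def HorizontalCells (s : Finset (ℕ × ℕ)) : Prop := ∀ p ∈ s, ∀ q ∈ s, p.1 = q.1

/-- A set of cells all lying in a single column. -/
def VerticalCells (s : Finset (ℕ × ℕ)) : Prop := ∀ p ∈ s, ∀ q ∈ s, p.2 = q.2

/-- Carter's condition (⋆): for all pairs of boxes in the same column of `lam`,
`ℓ` divides one hook length iff it divides the other. -/
def StarCond (ℓ : ℕ) (lam : YoungDiagram) : Prop :=
  ∀ a b c : ℕ, (a, c) ∈ lam → (b, c) ∈ lam →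
    (ℓ ∣ hookLen lam a c ↔ ℓ ∣ hookLen lam b c)

/-- `b` is obtained from `a` by removing a horizontal `ℓ`-rim hook;
equivalently `a` is obtained from `b` by adding a horizontal `ℓ`-rim hook. -/
def RemoveHorizHook (ℓ : ℕ) (a b : YoungDiagram) : Prop :=
  ∃ s, IsRemovableRimHook ℓ a s ∧ HorizontalCells s ∧ b.cells = a.cells \ s

/-- A partition is `ℓ`-regular if it has no `ℓ` equal nonzero parts. -/
def Regular (ℓ : ℕ) (lam : YoungDiagram) : Prop :=
  ∀ i : ℕ, lam.rowLen i = lam.rowLen (i + ℓ - 1) → lam.rowLen i = 0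

/-- An `ℓ`-partition: an `ℓ`-regular partition each of whose removable `ℓ`-rim hooks
is horizontal, and such that this remains true after removing any sequence of
horizontal `ℓ`-rim hooks. -/
def IsEllPartition (ℓ : ℕ) (lam : YoungDiagram) : Prop :=
  Regular ℓ lam ∧
  ∀ μ : YoungDiagram, Relation.ReflTransGen (RemoveHorizHook ℓ) lam μ →
    ∀ s, IsRemovableRimHook ℓ μ s → HorizontalCells s

/-- The residue of the position in row `a`, column `b` (0-indexed): `(b - a) mod ℓ`. -/
def resBox (ℓ : ℕ) (a b : ℕ) : ZMod ℓ := (b : ZMod ℓ) - (a : ZMod ℓ)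

/-- `(a,b)` is a removable box of `lam`: it is a box of `lam` whose removal
leaves a Young diagram. -/
def IsRemovableBox (lam : YoungDiagram) (a b : ℕ) : Prop :=
  (a, b) ∈ lam ∧ (a, b + 1) ∉ lam ∧ (a + 1, b) ∉ lam

/-- `(a,b)` is an addable box of `lam`: it is not a box of `lam` and adding it
yields a Young diagram. -/
def IsAddableBox (lam : YoungDiagram) (a b : ℕ) : Prop :=
  (a, b) ∉ lam ∧ (b = 0 ∨ (a, b - 1) ∈ lam) ∧ (a = 0 ∨ (a - 1, b) ∈ lam)

namespace StmtAux

open Relation Finset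

def val (μ : YoungDiagram) (r : ℕ) : ℤ := (μ.rowLen r : ℤ) - r

lemma val_succ_le (μ : YoungDiagram) (r : ℕ) : val μ (r+1) ≤ val μ r - 1 := by
  have h := μ.rowLen_anti r (r+1) (Nat.le_succ r)
  simp only [val]; push_cast; omega

lemma val_add_le (μ : YoungDiagram) (r m : ℕ) : val μ (r+m) ≤ val μ r - m := by
  induction m with
  | zero => simp
  | succ k ih =>
    have h := val_succ_le μ (r+k)
    have he : r + (k+1) = (r+k) + 1 := rfl
    rw [he]; push_cast; push_cast at ih; omega

lemma val_lt (μ : YoungDiagram) {r r' : ℕ} (h : r < r') : val μ r' < val μ r := by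
  have h1 := val_add_le μ r (r' - r)
  have h2 : r + (r' - r) = r' := by omega
  rw [h2] at h1
  have h3 : (1:ℤ) ≤ ((r' - r : ℕ) : ℤ) := by exact_mod_cast Nat.one_le_iff_ne_zero.mpr (by omega)
  omega

lemma val_le (μ : YoungDiagram) {r r' : ℕ} (h : r ≤ r') : val μ r' ≤ val μ r := by
  rcases eq_or_lt_of_le h with h' | h'
  · rw [h']
  · exact le_of_lt (val_lt μ h')

def Bd (μ : YoungDiagram) (v : ℤ) : Prop := ∃ r : ℕ, val μ r = v

lemma adj_symm : Symmetric AdjCell := by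
  intro p q h; unfold AdjCell at *; tauto

end StmtAux
namespace StmtAux

open Relation Finset

lemma rimhook (ℓ : ℕ) (hℓ : 1 ≤ ℓ) (μ : YoungDiagram) (x c' : ℕ) (e : ℤ)
    (hxc : x ≤ c')
    (hmid : ∀ r, x ≤ r → r ≤ c' → e < val μ r)
    (hfoot : val μ (c'+1) < e)
    (hlen : val μ x = e + ℓ)
    (hpos : ∀ r, x ≤ r → r ≤ c' → 1 ≤ μ.rowLen r) :
    ∃ μ' : YoungDiagram,
      μ'.cells ⊆ μ.cells ∧
      IsRemovableRimHook ℓ μ (μ.cells \ μ'.cells) ∧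
      (x, μ.rowLen x - 1) ∈ μ.cells \ μ'.cells ∧
      (c', μ.rowLen c' - 1) ∈ μ.cells \ μ'.cells ∧
      (∀ r, r < x ∨ c' < r → μ'.rowLen r = μ.rowLen r) ∧
      (x = c' → val μ' x = e) := by
  classical
  have hec : 0 ≤ e + c' := by
    have h1 : (0:ℤ) ≤ (μ.rowLen (c'+1) : ℤ) := by positivity
    have h2 := hfoot
    simp only [val] at h2
    push_cast at h2
    omega
  set nl : ℕ → ℕ := fun r =>
    if r < x then μ.rowLen r
    else if r < c' then μ.rowLen (r+1) - 1
    else if r = c' then (e + c').toNat else μ.rowLen r with hnl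
  have nl_ltx : ∀ r, r < x → nl r = μ.rowLen r := by
    intro r h; simp only [hnl]; rw [if_pos h]
  have nl_mid : ∀ r, x ≤ r → r < c' → nl r = μ.rowLen (r+1) - 1 := by
    intro r h1 h2; simp only [hnl]; rw [if_neg (by omega), if_pos h2]
  have nl_c : nl c' = (e + c').toNat := by
    simp only [hnl]; rw [if_neg (by omega), if_neg (by omega)]; simp
  have nl_gt : ∀ r, c' < r → nl r = μ.rowLen r := by
    intro r h; simp only [hnl]; rw [if_neg (by omega), if_neg (by omega), if_neg (by omega)]
  have nl_out : ∀ r, r < x ∨ c' < r → nl r = μ.rowLen r := by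
    rintro r (h | h)
    · exact nl_ltx r h
    · exact nl_gt r h
  have nl_lt : ∀ r, x ≤ r → r ≤ c' → nl r < μ.rowLen r := by
    intro r h1 h2
    rcases lt_or_eq_of_le h2 with h3 | h3
    · rw [nl_mid r h1 h3]
      have h4 := μ.rowLen_anti r (r+1) (Nat.le_succ r)
      have h5 := hpos r h1 h2
      omega
    · subst h3
      rw [nl_c]
      have h4 := hmid r h1 le_rfl
      simp only [val] at h4
      omega
  have nl_le : ∀ r, nl r ≤ μ.rowLen r := by
    intro r
    by_cases h1 : x ≤ r
    · by_cases h2 : r ≤ c'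
      · exact le_of_lt (nl_lt r h1 h2)
      · rw [nl_gt r (by omega)]
    · rw [nl_ltx r (by omega)]
  have nl_anti_succ : ∀ r, nl (r+1) ≤ nl r := by
    intro r
    have hanti := μ.rowLen_anti r (r+1) (Nat.le_succ r)
    by_cases h1 : r + 1 < x
    · rw [nl_ltx r (by omega), nl_ltx (r+1) h1]; exact hanti
    · by_cases h2 : r < x
      · rw [nl_ltx r h2]
        exact le_trans (nl_le (r+1)) hanti
      · by_cases h3 : r + 1 < c'
        · rw [nl_mid r (by omega) (by omega), nl_mid (r+1) (by omega) h3]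
          exact Nat.sub_le_sub_right (μ.rowLen_anti (r+1) (r+2) (by omega)) 1
        · by_cases h4 : r + 1 = c'
          · rw [nl_mid r (by omega) (by omega), h4, nl_c]
            have h5 := hmid c' hxc le_rfl
            simp only [val] at h5
            have h6 := hpos c' hxc le_rfl
            omega
          · by_cases h5 : r = c'
            · subst h5
              rw [nl_c, nl_gt (r+1) (by omega)]
              have h6 := hfoot
              simp only [val] at h6
              omega
            · rw [nl_gt r (by omega), nl_gt (r+1) (by omega)]; exact hanti
  have nl_anti : ∀ r r', r ≤ r' → nl r' ≤ nl r :=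
    fun r r' h => antitone_nat_of_succ_le nl_anti_succ h
  -- the new diagram
  set mu' : YoungDiagram :=
    ⟨μ.cells.filter (fun p => p.2 < nl p.1), by
      intro p q hpq hq
      simp only [Finset.coe_filter, Set.mem_setOf_eq] at hq ⊢
      obtain ⟨h1, h2⟩ := Prod.le_def.mp hpq
      constructor
      · have := μ.isLowerSet hpq (by simpa [YoungDiagram.mem_cells] using hq.1)
        simpa [YoungDiagram.mem_cells] using this
      · exact lt_of_le_of_lt h2 (lt_of_lt_of_le hq.2 (nl_anti q.1 p.1 h1))⟩ with hmu'
  have hcells : mu'.cells = μ.cells.filter (fun p => p.2 < nl p.1) := rfl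
  have mem_mu' : ∀ a b : ℕ, ((a, b) ∈ mu'.cells ↔ b < nl a) := by
    intro a b
    rw [hcells, Finset.mem_filter]
    constructor
    · exact fun h => h.2
    · intro h
      refine ⟨?_, h⟩
      rw [YoungDiagram.mem_cells]
      exact YoungDiagram.mem_iff_lt_rowLen.mpr (lt_of_lt_of_le h (nl_le a))
  have rl_mu' : ∀ r, mu'.rowLen r = nl r := by
    intro r
    apply le_antisymm
    · by_contra hcon
      push_neg at hcon
      have h1 : (r, nl r) ∈ mu' := YoungDiagram.mem_iff_lt_rowLen.mpr hcon
      rw [← YoungDiagram.mem_cells] at h1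
      have h2 := (mem_mu' r (nl r)).mp h1
      omega
    · by_contra hcon
      push_neg at hcon
      have h1 : (r, mu'.rowLen r) ∈ mu'.cells := (mem_mu' _ _).mpr hcon
      rw [YoungDiagram.mem_cells] at h1
      have := YoungDiagram.mem_iff_lt_rowLen.mp h1
      omega
  have hsub : mu'.cells ⊆ μ.cells := by rw [hcells]; exact Finset.filter_subset _ _
  set s : Finset (ℕ × ℕ) := μ.cells \ mu'.cells with hs
  have mem_s : ∀ a b : ℕ, ((a, b) ∈ s ↔ nl a ≤ b ∧ b < μ.rowLen a) := by
    intro a b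
    rw [hs, Finset.mem_sdiff, YoungDiagram.mem_cells, YoungDiagram.mem_iff_lt_rowLen, mem_mu']
    constructor
    · rintro ⟨h1, h2⟩; exact ⟨by omega, h1⟩
    · rintro ⟨h1, h2⟩; exact ⟨h2, by omega⟩
  have s_range : ∀ a b : ℕ, (a, b) ∈ s → x ≤ a ∧ a ≤ c' := by
    intro a b hab
    rw [mem_s] at hab
    by_contra hcon
    have : nl a = μ.rowLen a := nl_out a (by omega)
    omega
  have hhand : (x, μ.rowLen x - 1) ∈ s := by
    rw [mem_s]
    have h1 := nl_lt x le_rfl hxc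
    have h2 := hpos x le_rfl hxc
    omega
  have hfoots : (c', μ.rowLen c' - 1) ∈ s := by
    rw [mem_s]
    have h1 := nl_lt c' hxc le_rfl
    have h2 := hpos c' hxc le_rfl
    omega
  -- cardinality
  have hcard : s.card = ℓ := by
    have hrepr : s = (Finset.range (c' + 1 - x)).biUnion
        (fun k => (Finset.Ico (nl (x+k)) (μ.rowLen (x+k))).image (fun j => (x+k, j))) := by
      ext ⟨a, b⟩
      simp only [Finset.mem_biUnion, Finset.mem_range, Finset.mem_image, Finset.mem_Ico]
      rw [mem_s]
      constructor
      · rintro ⟨h1, h2⟩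
        obtain ⟨hx1, hx2⟩ := s_range a b ((mem_s a b).mpr ⟨h1, h2⟩)
        have hxa : x + (a - x) = a := by omega
        refine ⟨a - x, by omega, b, ?_, ?_⟩
        · rw [hxa]; exact ⟨h1, h2⟩
        · rw [hxa]
      · rintro ⟨k, hk, j, ⟨hj1, hj2⟩, hje⟩
        cases hje
        exact ⟨hj1, hj2⟩
    rw [hrepr, Finset.card_biUnion]
    · have hterm : ∀ k, ((Finset.Ico (nl (x+k)) (μ.rowLen (x+k))).image (fun j => (x+k, j))).card
          = μ.rowLen (x+k) - nl (x+k) := by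
        intro k
        rw [Finset.card_image_of_injective _ (fun a b h => by simpa using h), Nat.card_Ico]
      rw [Finset.sum_congr rfl (fun k _ => hterm k)]
      have hm : c' + 1 - x = (c' - x) + 1 := by omega
      rw [hm]
      have hcast : ((∑ k ∈ Finset.range ((c' - x) + 1), (μ.rowLen (x+k) - nl (x+k)) : ℕ) : ℤ)
          = ∑ k ∈ Finset.range ((c' - x) + 1), ((μ.rowLen (x+k) : ℤ) - (nl (x+k) : ℤ)) := by
        rw [Nat.cast_sum]
        exact Finset.sum_congr rfl (fun k _ => Nat.cast_sub (nl_le (x+k)))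
      have hsumZ : ∑ k ∈ Finset.range ((c' - x) + 1), ((μ.rowLen (x+k) : ℤ) - (nl (x+k) : ℤ)) = (ℓ:ℤ) := by
        rw [Finset.sum_range_succ]
        have hterm2 : ∀ k ∈ Finset.range (c' - x), ((μ.rowLen (x+k) : ℤ) - (nl (x+k) : ℤ))
            = val μ (x+k) - val μ (x+(k+1)) := by
          intro k hk
          rw [Finset.mem_range] at hk
          have h1 := hpos (x+k+1) (by omega) (by omega)
          rw [nl_mid (x+k) (by omega) (by omega), Nat.cast_sub h1]
          simp only [val]
          push_cast
          ring
        rw [Finset.sum_congr rfl hterm2, Finset.sum_range_sub' (fun k => val μ (x+k))]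
        have hxc2 : x + (c' - x) = c' := by omega
        rw [hxc2, nl_c]
        simp only [val, Nat.add_zero]
        have h3 := hmid c' hxc le_rfl
        simp only [val] at h3
        have h4 := hlen
        simp only [val] at h4
        omega
      omega
    · intro k1 h1 k2 h2 hne
      apply Finset.disjoint_left.mpr
      rintro ⟨a, b⟩ hp1 hp2
      simp only [Finset.mem_image, Finset.mem_Ico] at hp1 hp2
      obtain ⟨j1, _, hje1⟩ := hp1
      obtain ⟨j2, _, hje2⟩ := hp2
      apply hne
      have he1 := (Prod.mk.injEq _ _ _ _).mp hje1
      have he2 := (Prod.mk.injEq _ _ _ _).mp hje2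
      omega
  -- no 2x2
  have hno : No2x2 s := by
    rintro ⟨a, b, h1, h2, h3, h4⟩
    obtain ⟨hr1, hr2⟩ := s_range a b h1
    obtain ⟨hr3, hr4⟩ := s_range (a+1) (b+1) h4
    rw [mem_s] at h1 h4
    have h5 : nl a = μ.rowLen (a+1) - 1 := nl_mid a hr1 (by omega)
    have h6 := hpos (a+1) (by omega) (by omega)
    omega
  -- connectivity
  have row_path : ∀ dd r j, x ≤ r → r ≤ c' → nl r ≤ j → j + dd + 1 = μ.rowLen r →
      Relation.ReflTransGen (fun u t => u ∈ s ∧ t ∈ s ∧ AdjCell u t) (r, j) (r, μ.rowLen r - 1) := by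
    intro dd
    induction dd with
    | zero =>
      intro r j h1 h2 h3 h4
      have he : j = μ.rowLen r - 1 := by omega
      rw [he]
    | succ k ih =>
      intro r j h1 h2 h3 h4
      refine Relation.ReflTransGen.head ⟨?_, ?_, ?_⟩ (ih r (j+1) h1 h2 (by omega) (by omega))
      · exact (mem_s r j).mpr ⟨h3, by omega⟩
      · exact (mem_s r (j+1)).mpr ⟨by omega, by omega⟩
      · left; exact ⟨rfl, Or.inr rfl⟩
  have to_hand : ∀ mk r, x + mk = r → r ≤ c' →
      Relation.ReflTransGen (fun u t => u ∈ s ∧ t ∈ s ∧ AdjCell u t) (r, μ.rowLen r - 1) (x, μ.rowLen x - 1) := by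
    intro mk
    induction mk with
    | zero =>
      intro r h1 h2
      have he : r = x := by omega
      rw [he]
    | succ k ih =>
      intro r h1 h2
      have hr1 : 1 ≤ r := by omega
      have hra : x ≤ r - 1 := by omega
      have hrb : r - 1 < c' := by omega
      have hmono := μ.rowLen_anti (r-1) r (by omega)
      have hp1 : 1 ≤ μ.rowLen r := hpos r (by omega) h2
      have hnlr : nl (r-1) = μ.rowLen r - 1 := by
        have hh := nl_mid (r-1) hra hrb
        rw [hh]
        congr 2
        omega
      have hm1 : (r, μ.rowLen r - 1) ∈ s :=
        (mem_s _ _).mpr ⟨by have := nl_lt r (by omega) h2; omega, by omega⟩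
      have hm2 : (r - 1, μ.rowLen r - 1) ∈ s := (mem_s _ _).mpr ⟨by omega, by omega⟩
      refine Relation.ReflTransGen.head ⟨hm1, hm2, ?_⟩
        (Relation.ReflTransGen.trans
          (row_path (μ.rowLen (r-1) - μ.rowLen r) (r-1) (μ.rowLen r - 1) hra (by omega) (by omega) (by omega))
          (ih (r-1) (by omega) (by omega)))
      right; exact ⟨rfl, Or.inl (by omega)⟩
  have hconn : ConnectedCells s := by
    have key : ∀ p : ℕ × ℕ, p ∈ s →
        Relation.ReflTransGen (fun u t => u ∈ s ∧ t ∈ s ∧ AdjCell u t) p (x, μ.rowLen x - 1) := by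
      rintro ⟨a, b⟩ hab
      obtain ⟨hx1, hx2⟩ := s_range a b hab
      obtain ⟨hb1, hb2⟩ := (mem_s a b).mp hab
      exact Relation.ReflTransGen.trans
        (row_path (μ.rowLen a - 1 - b) a b hx1 hx2 hb1 (by omega))
        (to_hand (a - x) a (by omega) hx2)
    intro p hp q hq
    have hsymm : Symmetric (fun u t => u ∈ s ∧ t ∈ s ∧ AdjCell u t) :=
      fun u t ht => ⟨ht.2.1, ht.1, adj_symm ht.2.2⟩
    exact Relation.ReflTransGen.trans (key p hp) ((@Relation.ReflTransGen.stdSymm _ _ ⟨hsymm⟩).symm _ _ (key q hq))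
  have hhook : IsRemovableRimHook ℓ μ s := ⟨mu', hsub, hs, hcard, hconn, hno⟩
  have hrout : ∀ r, r < x ∨ c' < r → mu'.rowLen r = μ.rowLen r := by
    intro r hr; rw [rl_mu' r, nl_out r hr]
  have hvx : x = c' → val mu' x = e := by
    intro hxx
    simp only [val]
    rw [rl_mu' x, hxx, nl_c]
    omega
  exact ⟨mu', hsub, hhook, hhand, hfoots, hrout, hvx⟩

end StmtAux
namespace StmtAux

open Relation Finset

lemma step (ℓ : ℕ) (hℓ : 2 ≤ ℓ) (μ : YoungDiagram) (v w : ℤ)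
    (hv : Bd μ v) (hw : Bd μ w) (hv1 : ¬ Bd μ (v+1)) (hw1 : ¬ Bd μ (w-1))
    (hlt : w < v) (hdvd : (ℓ:ℤ) ∣ (v+1-w))
    (hall : ∀ s, IsRemovableRimHook ℓ μ s → HorizontalCells s) :
    ∃ μ' v', RemoveHorizHook ℓ μ μ' ∧ Bd μ' v' ∧ Bd μ' w ∧ ¬ Bd μ' (v'+1) ∧
      ¬ Bd μ' (w-1) ∧ w < v' ∧ (ℓ:ℤ) ∣ (v'+1-w) ∧ v' ≤ v - ℓ := by
  classical
  -- find the minimal bead δ on the runner of v that is ≥ w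
  have hPex : ∃ n : ℕ, Bd μ (w + n) ∧ (ℓ:ℤ) ∣ (v - (w + n)) := by
    refine ⟨(v - w).toNat, ?_, ?_⟩
    · have he : w + ((v - w).toNat : ℤ) = v := by
        rw [Int.toNat_of_nonneg (by omega)]; ring
      rw [he]; exact hv
    · have he : w + ((v - w).toNat : ℤ) = v := by
        rw [Int.toNat_of_nonneg (by omega)]; ring
      rw [he]; simp
  set N := Nat.find hPex with hN
  obtain ⟨hδB, hδd⟩ := Nat.find_spec hPex
  have hmin : ∀ n : ℕ, n < N → ¬ (Bd μ (w + n) ∧ (ℓ:ℤ) ∣ (v - (w + n))) :=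
    fun n hn => Nat.find_min hPex hn
  set δ : ℤ := w + N with hδ
  have hδv : δ ≤ v := by
    have h1 : N ≤ (v - w).toNat := Nat.find_min' hPex (by
      constructor
      · have he : w + ((v - w).toNat : ℤ) = v := by
          rw [Int.toNat_of_nonneg (by omega)]; ring
        rw [he]; exact hv
      · have he : w + ((v - w).toNat : ℤ) = v := by
          rw [Int.toNat_of_nonneg (by omega)]; ring
        rw [he]; simp)
    have h2 : ((N:ℤ)) ≤ ((v - w).toNat : ℤ) := by exact_mod_cast h1
    rw [Int.toNat_of_nonneg (by omega)] at h2
    omega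
  have hδw : w ≤ δ := by
    have : (0:ℤ) ≤ (N:ℤ) := by positivity
    omega
  have hdvd2 : (ℓ:ℤ) ∣ δ + 1 - w := by
    have he : δ + 1 - w = (v + 1 - w) - (v - δ) := by ring
    rw [he]; exact dvd_sub hdvd hδd
  have hgeℓ : w - 1 + ℓ ≤ δ := by
    have h1 : 0 < δ + 1 - w := by omega
    have h2 := Int.le_of_dvd h1 hdvd2
    omega
  have hgap : ¬ Bd μ (δ - ℓ) := by
    intro hB
    by_cases hc : w ≤ δ - ℓ
    · have hn0 : w + ((δ - ℓ - w).toNat : ℤ) = δ - ℓ := by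
        rw [Int.toNat_of_nonneg (by omega)]; ring
      refine hmin (δ - ℓ - w).toNat ?_ ⟨by rw [hn0]; exact hB, by
        rw [hn0]
        have he : v - (δ - ℓ) = (v - δ) + ℓ := by ring
        rw [he]; exact dvd_add hδd (dvd_refl _)⟩
      have : (((δ - ℓ - w).toNat : ℤ)) < N := by
        rw [Int.toNat_of_nonneg (by omega)]
        have : (0:ℤ) < ℓ := by positivity
        omega
      exact_mod_cast this
    · have he : δ - ℓ = w - 1 := by omega
      rw [he] at hB; exact hw1 hB
  obtain ⟨x, hx⟩ := hδB
  have hxval : val μ x = δ := hx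
  -- find the foot row
  have hQex : ∃ k : ℕ, val μ (x + (k + 1)) < δ - ℓ := by
    refine ⟨ℓ, ?_⟩
    have h1 := val_add_le μ x (ℓ + 1)
    rw [hxval] at h1
    push_cast at h1
    omega
  set m := Nat.find hQex with hm
  have hfoot : val μ ((x + m) + 1) < δ - ℓ := by
    have := Nat.find_spec hQex
    have he : x + (m + 1) = (x + m) + 1 := by omega
    rwa [he] at this
  set c' := x + m with hc'
  have hmid : ∀ r, x ≤ r → r ≤ c' → δ - ℓ < val μ r := by
    intro r h1 h2
    rcases eq_or_lt_of_le h1 with h3 | h3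
    · rw [← h3, hxval]
      have : (0:ℤ) < ℓ := by positivity
      omega
    · have hk : r - x - 1 < m := by omega
      have h4 := Nat.find_min hQex hk
      have he : x + ((r - x - 1) + 1) = r := by omega
      rw [he] at h4
      push_neg at h4
      rcases eq_or_lt_of_le h4 with h5 | h5
      · exact absurd ⟨r, h5.symm⟩ hgap
      · exact h5
  obtain ⟨cw, hcw⟩ := hw
  have hpos : ∀ r, x ≤ r → r ≤ c' → 1 ≤ μ.rowLen r := by
    intro r h1 h2
    have h3 : w ≤ val μ r := by
      have := hmid r h1 h2
      omega
    have hcw1 : 1 ≤ μ.rowLen cw := by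
      by_contra hcon
      push_neg at hcon
      have h0 : μ.rowLen cw = 0 := by omega
      have h0' : μ.rowLen (cw+1) = 0 := by
        have := μ.rowLen_anti cw (cw+1) (by omega)
        omega
      apply hw1
      refine ⟨cw + 1, ?_⟩
      simp only [val] at hcw ⊢
      rw [h0'] at *
      rw [h0] at hcw
      push_cast at hcw ⊢
      omega
    have hrcw : r ≤ cw := by
      by_contra hcon
      push_neg at hcon
      have := val_lt μ hcon
      omega
    have := μ.rowLen_anti r cw hrcw
    omega
  have hlen : val μ x = (δ - ℓ) + ℓ := by rw [hxval]; ring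
  obtain ⟨mu', hsub, hhook, hhand, hfoots, hrout, hvalx⟩ :=
    rimhook ℓ (by omega) μ x c' (δ - ℓ) (by omega) hmid hfoot hlen hpos
  have hhor := hall _ hhook
  have hxc' : x = c' := hhor _ hhand _ hfoots
  -- the case δ - ℓ = w - 1 is impossible
  have hge : w ≤ δ - ℓ := by
    by_contra hcon
    push_neg at hcon
    have heq : δ - ℓ = w - 1 := by omega
    have h1 : x < cw := by
      by_contra hcon2
      push_neg at hcon2
      rcases eq_or_lt_of_le hcon2 with h3 | h3
      · rw [h3] at hcw
        rw [hxval] at hcw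
        omega
      · have := val_lt μ h3
        rw [hxval, hcw] at this
        omega
    have h2 : cw ≤ c' := by
      by_contra hcon2
      push_neg at hcon2
      have h3 : c' + 1 ≤ cw := by omega
      have h4 := val_le μ h3
      rw [hcw] at h4
      omega
    omega
  have hne : δ - ℓ ≠ w := by
    intro hh
    exact hgap ⟨cw, by rw [hcw]; exact hh.symm⟩
  have hval_out : ∀ r, r ≠ x → val mu' r = val μ r := by
    intro r hr
    simp only [val]
    rw [hrout r (by omega)]
  have hvx : val mu' x = δ - ℓ := hvalx hxc'
  refine ⟨mu', δ - ℓ, ⟨μ.cells \ mu'.cells, hhook, hhor, (Finset.sdiff_sdiff_eq_self hsub).symm⟩,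
    ⟨x, hvx⟩, ?_, ?_, ?_, by omega, ?_, by omega⟩
  · refine ⟨cw, ?_⟩
    rw [hval_out cw ?_]
    · exact hcw
    · intro hh
      rw [hh, hxval] at hcw
      omega
  · rintro ⟨r, hr⟩
    by_cases hrx : r = x
    · rw [hrx, hvx] at hr
      omega
    · rw [hval_out r hrx] at hr
      by_cases hlx : r < x
      · have := val_lt μ hlx
        rw [hxval] at this
        omega
      · have h3 : x + 1 ≤ r := by omega
        have h4 := val_le μ h3
        have h5 : val μ (x+1) < δ - ℓ := by
          have he : x + 1 = c' + 1 := by omega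
          rw [he]; exact hfoot
        omega
  · rintro ⟨r, hr⟩
    by_cases hrx : r = x
    · rw [hrx, hvx] at hr
      omega
    · rw [hval_out r hrx] at hr
      exact hw1 ⟨r, hr⟩
  · have he : (δ - ℓ) + 1 - w = (δ + 1 - w) - ℓ := by ring
    rw [he]
    exact dvd_sub hdvd2 (dvd_refl _)

lemma descend (ℓ : ℕ) (hℓ : 2 ≤ ℓ) (lam : YoungDiagram)
    (H : ∀ μ, Relation.ReflTransGen (RemoveHorizHook ℓ) lam μ →
      ∀ s, IsRemovableRimHook ℓ μ s → HorizontalCells s) :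
    ∀ n : ℕ, ∀ μ, Relation.ReflTransGen (RemoveHorizHook ℓ) lam μ →
      ∀ v w : ℤ, Bd μ v → Bd μ w → ¬ Bd μ (v+1) → ¬ Bd μ (w-1) →
      w < v → (ℓ:ℤ) ∣ (v+1-w) → v - w ≤ (n:ℤ) → False := by
  intro n
  induction n with
  | zero => intro μ _ v w _ _ _ _ hlt _ hle; omega
  | succ k ih =>
    intro μ hreach v w hv hw hv1 hw1 hlt hdvd hle
    obtain ⟨μ', v', hmove, h1, h2, h3, h4, h5, h6, h7⟩ :=
      step ℓ hℓ μ v w hv hw hv1 hw1 hlt hdvd (H μ hreach)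
    exact ih μ' (hreach.tail hmove) v' w h1 h2 h3 h4 h5 h6 (by push_cast; push_cast at hle; omega)

end StmtAux
/-- If `lam` is an `ℓ`-partition, then its `i`-signature equals its reduced
`i`-signature: there is no addable `i`-box of `lam` in a row strictly above a
removable `i`-box of `lam`. -/
theorem stmt_12 (ℓ : ℕ) (hℓ : 2 ≤ ℓ) (i : ZMod ℓ) (lam : YoungDiagram)
    (h : IsEllPartition ℓ lam) :
    ¬ ∃ a b c d : ℕ, IsAddableBox lam a b ∧ IsRemovableBox lam c d ∧
      resBox ℓ a b = i ∧ resBox ℓ c d = i ∧ a < c := by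
  rintro ⟨a, b, c, d, hadd, hrem, hra, hrc, hac⟩
  obtain ⟨hnab, hb0, ha0⟩ := hadd
  obtain ⟨hmem, hnd1, hnc1⟩ := hrem
  have hb : lam.rowLen a = b := by
    apply le_antisymm
    · by_contra hh
      push_neg at hh
      exact hnab (YoungDiagram.mem_iff_lt_rowLen.mpr hh)
    · rcases hb0 with h0 | h0
      · omega
      · have := YoungDiagram.mem_iff_lt_rowLen.mp h0
        omega
  have hd : lam.rowLen c = d + 1 := by
    apply le_antisymm
    · by_contra hh
      push_neg at hh
      exact hnd1 (YoungDiagram.mem_iff_lt_rowLen.mpr (by omega))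
    · exact YoungDiagram.mem_iff_lt_rowLen.mp hmem
  have hc1 : lam.rowLen (c+1) ≤ d := by
    by_contra hh
    push_neg at hh
    exact hnc1 (YoungDiagram.mem_iff_lt_rowLen.mpr hh)
  set v : ℤ := (b:ℤ) - a with hvdef
  set w : ℤ := (d:ℤ) + 1 - c with hwdef
  have hv : StmtAux.Bd lam v := ⟨a, by simp only [StmtAux.val]; rw [hb]⟩
  have hw : StmtAux.Bd lam w := ⟨c, by simp only [StmtAux.val]; rw [hd]; push_cast; ring⟩
  have hva : StmtAux.val lam a = v := by simp only [StmtAux.val]; rw [hb]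
  have hvc : StmtAux.val lam c = w := by simp only [StmtAux.val]; rw [hd]; push_cast; ring
  have hvw : w < v := by
    have h1 := lam.rowLen_anti a c (le_of_lt hac)
    simp only [hvdef, hwdef]
    omega
  have hv1 : ¬ StmtAux.Bd lam (v+1) := by
    rintro ⟨r, hr⟩
    rcases lt_trichotomy r a with h1 | h1 | h1
    · have ha1 : 1 ≤ a := by omega
      have hab : b + 1 ≤ lam.rowLen (a-1) := by
        rcases ha0 with h0 | h0
        · omega
        · exact YoungDiagram.mem_iff_lt_rowLen.mp h0
      have h2 : StmtAux.val lam (a-1) ≤ StmtAux.val lam r := StmtAux.val_le lam (by omega)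
      simp only [StmtAux.val] at h2 hr
      simp only [hvdef] at hr
      omega
    · rw [h1] at hr
      rw [hva] at hr
      omega
    · have h2 := StmtAux.val_lt lam h1
      rw [hva] at h2
      omega
  have hw1 : ¬ StmtAux.Bd lam (w-1) := by
    rintro ⟨r, hr⟩
    rcases lt_trichotomy r (c+1) with h1 | h1 | h1
    · have h2 : r ≤ c := by omega
      have h3 : StmtAux.val lam c ≤ StmtAux.val lam r := StmtAux.val_le lam h2
      rw [hvc] at h3
      omega
    · rw [h1] at hr
      simp only [StmtAux.val] at hr
      simp only [hwdef] at hr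
      push_cast at hr
      omega
    · have h2 : StmtAux.val lam r < StmtAux.val lam (c+1) := StmtAux.val_lt lam h1
      have h3 : StmtAux.val lam (c+1) ≤ (d:ℤ) - (c+1) := by
        simp only [StmtAux.val]
        push_cast
        omega
      simp only [hwdef] at hr
      omega
  have hdvd : (ℓ:ℤ) ∣ (v + 1 - w) := by
    have h0 : resBox ℓ a b = resBox ℓ c d := by rw [hra, hrc]
    unfold resBox at h0
    have h1 : ((((b:ℤ) - a - ((d:ℤ) - c)) : ℤ) : ZMod ℓ) = 0 := by
      push_cast
      rw [h0]
      ring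
    have h2 := (ZMod.intCast_zmod_eq_zero_iff_dvd _ ℓ).mp h1
    have he : v + 1 - w = (b:ℤ) - a - ((d:ℤ) - c) := by
      simp only [hvdef, hwdef]; ring
    rw [he]
    exact h2
  exact StmtAux.descend ℓ hℓ lam h.2 (v - w).toNat lam Relation.ReflTransGen.refl v w
    hv hw hv1 hw1 hvw hdvd (by rw [Int.toNat_of_nonneg (by omega)])
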